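/- Let y : [0,∞) → ℝⁿ solve ẏ = -k·y·(1/‖y‖ + ‖y‖) for y ≠ 0 with k > 0. Then V(y) = ½‖y‖² satisfies V̇ = -k(2V)^(1/2) - k(2V)^(3/2) along trajectories, and consequently y(t) reaches 0 within time π/(2k) for every initial condition y(0) ∈ ℝⁿ. -/

import Mathlib

open Real

/-- For the flow `ẏ = -k·y·(1/‖y‖ + ‖y‖)` (away from `0`) with `k > 0`,
the Lyapunov function `V = ½‖y‖²` satisfies `V̇ = -k(2V)^(1/2) - k(2V)^(3/2)` along
trajectories, and `y` reaches `0` within time `π/(2k)`. -/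
theorem stmt_4 (n : ℕ) (k : ℝ) (hk : 0 < k)
    (y : ℝ → EuclideanSpace ℝ (Fin n))
    (hODE : ∀ t, 0 ≤ t → y t ≠ 0 →
      HasDerivAt y ((-(k * (1 / ‖y t‖ + ‖y t‖))) • y t) t)
    (hstat : ∀ t, 0 ≤ t → y t = 0 → ∀ s, t ≤ s → y s = 0) :
    (∀ t, 0 ≤ t → y t ≠ 0 →
      HasDerivAt (fun s => (1/2) * ‖y s‖^2)
        (-(k * (2 * ((1/2) * ‖y t‖^2)) ^ ((1:ℝ)/2))
          - k * (2 * ((1/2) * ‖y t‖^2)) ^ ((3:ℝ)/2)) t) ∧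
    ∃ T, 0 ≤ T ∧ T ≤ Real.pi / (2 * k) ∧ y T = 0 := by
  -- derivative of the squared norm
  have hsq : ∀ t, 0 ≤ t → y t ≠ 0 →
      HasDerivAt (fun s => ‖y s‖^2)
        (2 * ((-(k * (1 / ‖y t‖ + ‖y t‖))) * ‖y t‖^2)) t := by
    intro t ht hy
    have hd := hODE t ht hy
    have h1 : HasDerivAt (fun s => (inner ℝ (y s) (y s) : ℝ))
        ((inner ℝ (y t) ((-(k * (1 / ‖y t‖ + ‖y t‖))) • y t) : ℝ)
          + (inner ℝ ((-(k * (1 / ‖y t‖ + ‖y t‖))) • y t) (y t) : ℝ)) t :=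
      HasDerivAt.inner ℝ hd hd
    have h2 : (fun s => (inner ℝ (y s) (y s) : ℝ)) = fun s => ‖y s‖^2 := by
      funext s; rw [real_inner_self_eq_norm_sq]
    rw [h2] at h1
    convert h1 using 1
    rw [real_inner_smul_right, real_inner_smul_left, real_inner_self_eq_norm_sq]
    ring
  -- derivative of the norm
  have hnorm : ∀ t, 0 ≤ t → y t ≠ 0 →
      HasDerivAt (fun s => ‖y s‖) (-(k * (1 + ‖y t‖^2))) t := by
    intro t ht hy
    have r0 : (0:ℝ) < ‖y t‖ := norm_pos_iff.mpr hy
    have hs := (Real.hasDerivAt_sqrt (by positivity : ‖y t‖^2 ≠ 0)).comp t (hsq t ht hy)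
    have h2 : (fun s => Real.sqrt (‖y s‖^2)) = fun s => ‖y s‖ := by
      funext s; exact Real.sqrt_sq (norm_nonneg _)
    rw [Function.comp_def, h2] at hs
    refine hs.congr_deriv ?_
    rw [Real.sqrt_sq r0.le]
    field_simp
  constructor
  · intro t ht hy
    have r0 : (0:ℝ) < ‖y t‖ := norm_pos_iff.mpr hy
    have h := (hsq t ht hy).const_mul (1/2 : ℝ)
    refine h.congr_deriv ?_
    have e1 : (2 * ((1/2) * ‖y t‖^2)) = ‖y t‖^2 := by ring
    rw [e1]
    have e2 : (‖y t‖^2 : ℝ) ^ ((1:ℝ)/2) = ‖y t‖ := by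
      rw [← Real.rpow_natCast ‖y t‖ 2, ← Real.rpow_mul r0.le]
      norm_num
    have e3 : (‖y t‖^2 : ℝ) ^ ((3:ℝ)/2) = ‖y t‖^3 := by
      rw [← Real.rpow_natCast ‖y t‖ 2, ← Real.rpow_mul r0.le]
      norm_num
    rw [e2, e3]
    field_simp
    ring
  · by_cases h0 : y 0 = 0
    · exact ⟨0, le_refl _, by positivity, h0⟩
    set T := Real.arctan ‖y 0‖ / k with hT
    have hT0 : 0 ≤ T := by
      apply div_nonneg _ hk.le
      rw [← Real.arctan_zero]; exact (Real.arctan_strictMono.monotone (norm_nonneg _))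
    have hTle : T ≤ Real.pi / (2 * k) := by
      rw [div_le_div_iff₀ hk (by positivity)]
      have := (Real.arctan_lt_pi_div_two ‖y 0‖).le
      calc Real.arctan ‖y 0‖ * (2 * k) = (Real.arctan ‖y 0‖ * 2) * k := by ring
        _ ≤ Real.pi * k := by
            apply mul_le_mul_of_nonneg_right _ hk.le
            linarith
    refine ⟨T, hT0, hTle, ?_⟩
    by_contra hyT
    have hne : ∀ s ∈ Set.Icc (0:ℝ) T, y s ≠ 0 := by
      intro s hs hzero
      exact hyT (hstat s hs.1 hzero T hs.2)
    set f : ℝ → ℝ := fun s => Real.arctan ‖y s‖ + k * s with hf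
    have hderiv : ∀ s ∈ Set.Icc (0:ℝ) T, HasDerivAt f 0 s := by
      intro s hs
      have hn := hnorm s hs.1 (hne s hs)
      have ha := (Real.hasDerivAt_arctan ‖y s‖).comp s hn
      have hb : HasDerivAt (fun u => k * u) k s := by
        simpa using (hasDerivAt_id s).const_mul k
      have := ha.add hb
      refine this.congr_deriv ?_
      field_simp
      ring
    have hcont : ContinuousOn f (Set.Icc 0 T) :=
      fun s hs => ((hderiv s hs).continuousAt).continuousWithinAt
    have hconst := constant_of_has_deriv_right_zero hcont
      (fun s hs => ((hderiv s ⟨hs.1, hs.2.le⟩).hasDerivWithinAt))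
      T ⟨hT0, le_refl _⟩
    have : Real.arctan ‖y T‖ + k * T = Real.arctan ‖y 0‖ + k * 0 := hconst
    rw [mul_zero, add_zero, hT, mul_div_cancel₀ _ hk.ne'] at this
    have harct : Real.arctan ‖y T‖ = 0 := by linarith
    have : ‖y T‖ = 0 := by
      rwa [Real.arctan_eq_zero_iff] at harct
    exact hyT (norm_eq_zero.mp this)
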